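/- Let X₁,...,Xₗ be independent random variables where for i ≤ t, Xᵢ is identically equal to μᵢ, and for i ≥ t+1, Xᵢ takes the value 1 - Σ_{j≤t} μⱼ with probability μᵢ/(1 - Σ_{j≤t} μⱼ) and 0 otherwise. Assume 0 ≤ μ₁ ≤ ... ≤ μₗ and Σᵢ μᵢ < 1. Then each Xᵢ has expectation μᵢ and P(X₁ + ... + Xₗ < 1) = Π_{i=t+1}^{l} (1 - μᵢ/(1 - Σ_{j=1}^{t} μⱼ)). -/

import Mathlib

open MeasureTheory ProbabilityTheory Finset

/-- The explicit collection of independent random variables achieving `Q_t`: for `i ≤ t`,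
`Xᵢ ≡ μᵢ`; for `i ≥ t+1`, `Xᵢ` takes value `1 - Σ_{j≤t} μⱼ` with probability
`μᵢ/(1 - Σ_{j≤t} μⱼ)` and `0` otherwise. Then `E[Xᵢ] = μᵢ` and
`P(Σ Xᵢ < 1) = Π_{i≥t+1} (1 - μᵢ/(1 - Σ_{j≤t} μⱼ))`. -/
theorem Qt_achieved (l t : ℕ) (hl : 1 ≤ l) (ht : t < l)
    (μ : Fin l → ℝ) (hμ0 : ∀ i, 0 ≤ μ i) (hμmono : Monotone μ)
    (hμsum : ∑ i, μ i < 1)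
    (Ω : Type*) [MeasurableSpace Ω] (P : Measure Ω) [IsProbabilityMeasure P]
    (X : Fin l → Ω → ℝ) (hmeas : ∀ i, Measurable (X i))
    (hindep : iIndepFun X P)
    (S : ℝ) (hS : S = ∑ i ∈ Finset.univ.filter (fun j : Fin l => (j : ℕ) < t), μ i)
    (hconst : ∀ i : Fin l, (i : ℕ) < t → X i = fun _ => μ i)
    (htwoval : ∀ i : Fin l, t ≤ (i : ℕ) →
      P {ω | X i ω = 1 - S} = ENNReal.ofReal (μ i / (1 - S)) ∧
      P {ω | X i ω = 0} = ENNReal.ofReal (1 - μ i / (1 - S)) ∧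
      ∀ ω, X i ω = 1 - S ∨ X i ω = 0) :
    (∀ i, ∫ ω, X i ω ∂P = μ i) ∧
    P {ω | ∑ i, X i ω < 1} =
      ENNReal.ofReal (∏ i ∈ Finset.univ.filter (fun j : Fin l => t ≤ (j : ℕ)),
        (1 - μ i / (1 - S))) := by
  -- basic facts
  have hSle : S ≤ ∑ i, μ i := by
    rw [hS]
    exact Finset.sum_le_sum_of_subset_of_nonneg (Finset.filter_subset _ _)
      (fun i _ _ => hμ0 i)
  have hS1 : S < 1 := lt_of_le_of_lt hSle hμsum
  have h1S : (0:ℝ) < 1 - S := by linarith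
  have h1Sne : (1:ℝ) - S ≠ 0 := ne_of_gt h1S
  -- for i with t ≤ i, μ i ≤ 1 - S
  have hμle : ∀ i : Fin l, t ≤ (i : ℕ) → S + μ i ≤ ∑ j, μ j := by
    intro i hi
    have hnot : i ∉ Finset.univ.filter (fun j : Fin l => (j : ℕ) < t) := by
      simp [Nat.not_lt.mpr hi]
    have : S + μ i = ∑ j ∈ insert i (Finset.univ.filter (fun j : Fin l => (j : ℕ) < t)), μ j := by
      rw [Finset.sum_insert hnot, hS]; ring
    rw [this]
    exact Finset.sum_le_sum_of_subset_of_nonneg (Finset.subset_univ _)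
      (fun j _ _ => hμ0 j)
  -- expectation claim
  have hexp : ∀ i, ∫ ω, X i ω ∂P = μ i := by
    intro i
    by_cases hi : (i : ℕ) < t
    · rw [hconst i hi]
      simp
    · have hi' : t ≤ (i : ℕ) := Nat.not_lt.mp hi
      obtain ⟨hp1, hp0, hv⟩ := htwoval i hi'
      have hA : MeasurableSet {ω | X i ω = 1 - S} :=
        (hmeas i) (measurableSet_singleton (1 - S))
      have hXeq : X i = Set.indicator {ω | X i ω = 1 - S} (fun _ => 1 - S) := by
        funext ω
        rcases hv ω with h | h
        · rw [h, Set.indicator_of_mem (by exact h)]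
        · rw [h, Set.indicator_of_notMem]
          simp only [Set.mem_setOf_eq, h]
          exact fun hc => h1Sne hc.symm
      rw [hXeq, integral_indicator_const _ hA, measureReal_def, hp1,
        ENNReal.toReal_ofReal (div_nonneg (hμ0 i) h1S.le)]
      simp only [smul_eq_mul]
      field_simp
  refine ⟨hexp, ?_⟩
  -- the event equals the intersection of {X i = 0}
  have hXnn : ∀ (i : Fin l) (hi : t ≤ (i : ℕ)) ω, 0 ≤ X i ω := by
    intro i hi ω
    rcases (htwoval i hi).2.2 ω with h | h <;> rw [h] <;> linarith
  have hsum_split : ∀ ω, ∑ i, X i ω =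
      S + ∑ i ∈ Finset.univ.filter (fun j : Fin l => t ≤ (j : ℕ)), X i ω := by
    intro ω
    have := Finset.sum_filter_add_sum_filter_not Finset.univ
      (fun j : Fin l => (j : ℕ) < t) (fun i => X i ω)
    rw [← this, hS]
    congr 1
    · exact Finset.sum_congr rfl (fun i hi => by
        rw [hconst i (Finset.mem_filter.mp hi).2])
    · apply Finset.sum_congr _ (fun _ _ => rfl)
      ext j; simp [Nat.not_lt]
  have hevent : {ω | ∑ i, X i ω < 1} =
      ⋂ i ∈ Finset.univ.filter (fun j : Fin l => t ≤ (j : ℕ)), {ω | X i ω = 0} := by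
    ext ω
    simp only [Set.mem_setOf_eq, Set.mem_iInter]
    constructor
    · intro hlt i hi
      have hi' : t ≤ (i : ℕ) := (Finset.mem_filter.mp hi).2
      rcases (htwoval i hi').2.2 ω with h | h
      · exfalso
        have hge : (1 - S) ≤ ∑ j ∈ Finset.univ.filter (fun j : Fin l => t ≤ (j : ℕ)), X j ω := by
          rw [← h]
          exact Finset.single_le_sum
            (fun j hj => hXnn j (Finset.mem_filter.mp hj).2 ω) hi
        rw [hsum_split ω] at hlt
        linarith
      · exact h
    · intro hz
      rw [hsum_split ω]
      have : ∑ i ∈ Finset.univ.filter (fun j : Fin l => t ≤ (j : ℕ)), X i ω = 0 :=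
        Finset.sum_eq_zero (fun i hi => hz i hi)
      rw [this]
      linarith
  rw [hevent]
  have hpre : (⋂ i ∈ Finset.univ.filter (fun j : Fin l => t ≤ (j : ℕ)), {ω | X i ω = 0}) =
      ⋂ i ∈ Finset.univ.filter (fun j : Fin l => t ≤ (j : ℕ)), X i ⁻¹' {0} := rfl
  rw [hpre]
  rw [hindep.meas_biInter (fun i hi =>
    ⟨{(0:ℝ)}, measurableSet_singleton 0, rfl⟩)]
  rw [ENNReal.ofReal_prod_of_nonneg]
  · exact Finset.prod_congr rfl (fun i hi =>
      (htwoval i (Finset.mem_filter.mp hi).2).2.1)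
  · intro i hi
    have hi' := (Finset.mem_filter.mp hi).2
    have := hμle i hi'
    have hμi : μ i ≤ 1 - S := by linarith
    have : μ i / (1 - S) ≤ 1 := (div_le_one h1S).mpr hμi
    linarith
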